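/- Let p be an odd prime and for each residue m modulo p let b_m denote the number of (p−1)-element subsets of {3, 4, ..., 2p} whose element sum is congruent to m modulo p. Then b_0 = b_1 = ... = b_{p−1} = C(2p−2, p−1)/p. In particular p divides C(2p−2, p−1). -/

import Mathlib

open Finset

private lemma key6 (p : ℕ) (hp : p.Prime) (hp3 : 3 ≤ p) (m : ZMod p) :
    ((((Finset.Icc 3 (2 * p)).powersetCard (p - 1)).filter
        (fun S => ((S.sum id : ℕ) : ZMod p) = m)).card) ≤
    ((((Finset.Icc 3 (2 * p)).powersetCard (p - 1)).filter
        (fun S => ((S.sum id : ℕ) : ZMod p) = m + 1)).card) := by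
  haveI : Fact p.Prime := ⟨hp⟩
  classical
  have hp0 : 0 < p := by omega
  set A : Finset ℕ := Finset.Icc 3 (2 * p) with hA
  let f : ℕ → ℕ → ℕ := fun t x => if x ≤ p + 2 then 3 + ((x + t - 3) % p) else x
  have hfA : ∀ t x, x ∈ A → f t x ∈ A := by
    intro t x hx
    simp only [hA, Finset.mem_Icc] at hx ⊢
    by_cases h : x ≤ p + 2 <;> simp only [f, h, if_true, if_false]
    · have := Nat.mod_lt (x + t - 3) hp0; omega
    · omega
  have hfle : ∀ t x, x ∈ A → (f t x ≤ p + 2 ↔ x ≤ p + 2) := by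
    intro t x hx
    simp only [hA, Finset.mem_Icc] at hx
    have hm := Nat.mod_lt (x + t - 3) hp0
    by_cases h : x ≤ p + 2
    · simp only [f, if_pos h]
      all_goals omega
    · simp only [f, if_neg h]
      all_goals omega
  have hfinj : ∀ t, Set.InjOn (f t) (A : Set ℕ) := by
    intro t x hx y hy hxy
    simp only [hA, Finset.coe_Icc, Set.mem_Icc] at hx hy
    by_cases h1 : x ≤ p + 2 <;> by_cases h2 : y ≤ p + 2 <;>
      simp only [f, h1, h2, if_true, if_false] at hxy
    · have h3 : (x - 3 + t) % p = (y - 3 + t) % p := by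
        rw [show x - 3 + t = x + t - 3 by omega, show y - 3 + t = y + t - 3 by omega]
        omega
      have h4 : (x - 3) % p = (y - 3) % p := Nat.ModEq.add_right_cancel' t h3
      rw [Nat.mod_eq_of_lt (by omega), Nat.mod_eq_of_lt (by omega)] at h4
      omega
    · have := Nat.mod_lt (x + t - 3) hp0; omega
    · have := Nat.mod_lt (y + t - 3) hp0; omega
    · exact hxy
  have hfcast : ∀ t x, x ∈ A →
      ((f t x : ℕ) : ZMod p) = (x : ZMod p) + (if x ≤ p + 2 then (t : ZMod p) else 0) := by
    intro t x hx
    simp only [hA, Finset.mem_Icc] at hx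
    by_cases h : x ≤ p + 2 <;> simp only [f, h, if_true, if_false]
    · have h2 : ((x + t - 3 + 3 : ℕ) : ZMod p) = ((x + t : ℕ) : ZMod p) := by
        congr 1; omega
      push_cast at h2 ⊢
      rw [ZMod.natCast_mod]
      linear_combination h2
    · simp
  let kk : Finset ℕ → ℕ := fun S => (S.filter (fun x => x ≤ p + 2)).card
  let tt : Finset ℕ → ℕ := fun S => ((kk S : ZMod p)⁻¹).val
  let Φ : Finset ℕ → Finset ℕ := fun S => S.image (f (tt S))
  -- k is between 1 and p-1
  have hk : ∀ S ∈ A.powersetCard (p - 1), (kk S : ZMod p) ≠ 0 := by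
    intro S hS
    rw [Finset.mem_powersetCard] at hS
    obtain ⟨hSA, hScard⟩ := hS
    have h1 : (S.filter (fun x => ¬ x ≤ p + 2)).card ≤ p - 2 := by
      have hsub : S.filter (fun x => ¬ x ≤ p + 2) ⊆ Finset.Icc (p + 3) (2 * p) := by
        intro x hx
        rw [Finset.mem_filter] at hx
        have h := hSA hx.1
        rw [hA, Finset.mem_Icc] at h
        rw [Finset.mem_Icc]
        omega
      calc (S.filter (fun x => ¬ x ≤ p + 2)).card ≤ (Finset.Icc (p + 3) (2 * p)).card :=
            Finset.card_le_card hsub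
        _ = p - 2 := by rw [Nat.card_Icc]; omega
    have h2 := Finset.card_filter_add_card_filter_not (s := S)
      (p := fun x => x ≤ p + 2)
    have h3 : kk S ≤ p - 1 := by
      simp only [kk]
      calc (S.filter (fun x => x ≤ p + 2)).card ≤ S.card := Finset.card_filter_le S _
        _ = p - 1 := hScard
    have h4 : 1 ≤ kk S := by simp only [kk]; omega
    rw [Ne, ZMod.natCast_eq_zero_iff]
    intro hdvd
    have := Nat.le_of_dvd (by omega) hdvd
    omega
  have ht : ∀ S ∈ A.powersetCard (p - 1), ((tt S : ℕ) : ZMod p) * (kk S : ZMod p) = 1 := by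
    intro S hS
    have h0 := hk S hS
    simp only [tt, ZMod.natCast_val, ZMod.cast_id]
    exact inv_mul_cancel₀ h0
  -- kk is preserved by images
  have hkimg : ∀ (t0 : ℕ) (T : Finset ℕ), T ⊆ A → kk (T.image (f t0)) = kk T := by
    intro t0 T hTA
    simp only [kk]
    have hfilter : T.filter (fun a => f t0 a ≤ p + 2) = T.filter (fun x => x ≤ p + 2) := by
      apply Finset.filter_congr
      intro x hx
      simpa using hfle t0 x (hTA hx)
    rw [Finset.filter_image, hfilter]
    apply Finset.card_image_of_injOn
    apply (hfinj t0).mono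
    intro x hx
    exact Finset.mem_coe.mpr (hTA (Finset.mem_of_mem_filter x (Finset.mem_coe.mp hx)))
  -- image equality implies set equality
  have himg : ∀ (t0 : ℕ) (T T' : Finset ℕ), T ⊆ A → T' ⊆ A →
      T.image (f t0) = T'.image (f t0) → T = T' := by
    have step : ∀ (t0 : ℕ) (T T' : Finset ℕ), T ⊆ A → T' ⊆ A →
        T.image (f t0) = T'.image (f t0) → T ⊆ T' := by
      intro t0 T T' hT hT' him x hx
      have h1 : f t0 x ∈ T'.image (f t0) := him ▸ Finset.mem_image_of_mem _ hx
      rw [Finset.mem_image] at h1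
      obtain ⟨y, hy, hxy⟩ := h1
      have h2 := hfinj t0 (Finset.mem_coe.mpr (hT' hy)) (Finset.mem_coe.mpr (hT hx)) hxy
      rwa [← h2]
    intro t0 T T' hT hT' him
    exact Finset.Subset.antisymm (step t0 T T' hT hT' him) (step t0 T' T hT' hT him.symm)
  apply Finset.card_le_card_of_injOn Φ
  · -- maps into
    intro S hS
    rw [Finset.mem_coe, Finset.mem_filter] at hS ⊢
    obtain ⟨hSp, hSm⟩ := hS
    have hSp' := hSp
    rw [Finset.mem_powersetCard] at hSp'
    obtain ⟨hSA, hScard⟩ := hSp'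
    have hinjS : Set.InjOn (f (tt S)) (S : Set ℕ) :=
      (hfinj (tt S)).mono (fun x hx => Finset.mem_coe.mpr (hSA (Finset.mem_coe.mp hx)))
    constructor
    · rw [Finset.mem_powersetCard]
      constructor
      · intro y hy
        rw [Finset.mem_image] at hy
        obtain ⟨x, hx, rfl⟩ := hy
        exact hfA _ x (hSA hx)
      · rw [Finset.card_image_of_injOn hinjS, hScard]
    · show (((S.image (f (tt S))).sum id : ℕ) : ZMod p) = m + 1
      rw [Finset.sum_image (fun x hx y hy h => hinjS (Finset.mem_coe.mpr hx) (Finset.mem_coe.mpr hy) h)]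
      rw [Nat.cast_sum]
      have hterm : ∀ x ∈ S, ((id (f (tt S) x) : ℕ) : ZMod p)
          = (x : ZMod p) + (if x ≤ p + 2 then ((tt S : ℕ) : ZMod p) else 0) :=
        fun x hx => hfcast _ x (hSA hx)
      rw [Finset.sum_congr rfl hterm, Finset.sum_add_distrib, ← Finset.sum_filter,
        Finset.sum_const]
      have h5 : (∑ x ∈ S, (x : ZMod p)) = m := by
        rw [← hSm, Nat.cast_sum]
        simp
      rw [h5]
      have h6 : (kk S) • ((tt S : ℕ) : ZMod p) = 1 := by
        rw [nsmul_eq_mul, mul_comm]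
        exact ht S hSp
      rw [show (S.filter (fun x => x ≤ p + 2)).card = kk S from rfl, h6]
  · -- injective
    intro S hS S' hS' hΦ
    simp only [Finset.mem_coe, Finset.mem_filter] at hS hS'
    obtain ⟨hSp, _⟩ := hS
    obtain ⟨hSp', _⟩ := hS'
    rw [Finset.mem_powersetCard] at hSp hSp'
    have hkeq : kk S = kk S' := by
      have e1 : kk (Φ S) = kk S := hkimg (tt S) S hSp.1
      have e2 : kk (Φ S') = kk S' := hkimg (tt S') S' hSp'.1
      rw [← e1, ← e2, show Φ S = Φ S' from hΦ]
    have hteq : tt S = tt S' := by simp only [tt, hkeq]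
    apply himg (tt S) S S' hSp.1 hSp'.1
    have hΦ' : S.image (f (tt S)) = S'.image (f (tt S')) := hΦ
    rw [← hteq] at hΦ'
    exact hΦ'

theorem stmt6 (p : ℕ) (hp : p.Prime) (hodd : Odd p) (b : ZMod p → ℕ)
    (hb : ∀ m, b m =
      (((Finset.Icc 3 (2 * p)).powersetCard (p - 1)).filter
        (fun S => ((S.sum id : ℕ) : ZMod p) = m)).card) :
    (∀ m k : ZMod p, b m = b k) ∧
    (∀ m : ZMod p, b m * p = (2 * p - 2).choose (p - 1)) ∧
    p ∣ (2 * p - 2).choose (p - 1) := by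
  haveI : Fact p.Prime := ⟨hp⟩
  have hp3 : 3 ≤ p := by
    have h2 := hp.two_le
    have ho := Nat.odd_iff.mp hodd
    omega
  have hmono : ∀ m : ZMod p, b m ≤ b (m + 1) := by
    intro m
    rw [hb, hb]
    exact key6 p hp hp3 m
  have hstep : ∀ (n : ℕ) (m : ZMod p), b m ≤ b (m + n) := by
    intro n
    induction n with
    | zero => intro m; simp
    | succ n ih =>
      intro m
      have h1 : b m ≤ b (m + 1 + n) := le_trans (hmono m) (ih (m + 1))
      have h2 : m + 1 + (n : ZMod p) = m + ((n + 1 : ℕ) : ZMod p) := by push_cast; ring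
      rwa [h2] at h1
  have hall : ∀ m k : ZMod p, b m ≤ b k := by
    intro m k
    have h := hstep ((k - m).val) m
    have h2 : m + (((k - m).val : ℕ) : ZMod p) = k := by
      rw [ZMod.natCast_val, ZMod.cast_id]; ring
    rwa [h2] at h
  have heq : ∀ m k : ZMod p, b m = b k := fun m k => le_antisymm (hall m k) (hall k m)
  have hsum : (∑ m : ZMod p, b m) = (2 * p - 2).choose (p - 1) := by
    have hcard : ((Finset.Icc 3 (2 * p)).powersetCard (p - 1)).card
        = (2 * p - 2).choose (p - 1) := by
      rw [Finset.card_powersetCard, Nat.card_Icc, show 2 * p + 1 - 3 = 2 * p - 2 from by omega]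
    rw [← hcard]
    rw [Finset.card_eq_sum_card_fiberwise
      (f := fun S : Finset ℕ => ((S.sum id : ℕ) : ZMod p)) (t := Finset.univ)
      (fun _ _ => Finset.mem_univ _)]
    refine Finset.sum_congr rfl fun m _ => ?_
    rw [← hb m]
  have hmul : ∀ m : ZMod p, b m * p = (2 * p - 2).choose (p - 1) := by
    intro m
    rw [← hsum, Finset.sum_congr rfl (fun k _ => heq k m), Finset.sum_const,
      Finset.card_univ, ZMod.card, smul_eq_mul, mul_comm]
  exact ⟨heq, hmul, ⟨b 0, by rw [← hmul 0]; ring⟩⟩
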